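/- Let m₁: A⊗A → A be the multiplication, Δ₁ = Δ: A → A⊗A, ι₁(t)=1⊗t, and ε₁: A⊗A → A the map (ε⊗Id) with ε(1)=−c, ε(X)=1. Define ℘ = m₁ − m₁∘Δ₁∘ε₁ : A⊗A → A and ℵ = ι₁ − c·(ι₁∘m₁∘Δ₁) : A → A⊗A. Then ℘∘Δ₁ = 0 and ℘∘ℵ = Id_A. -/
import Mathlib


open TensorProduct

noncomputable section

abbrev R : Type := Polynomial ℤ
abbrev A : Type := R × R

/-- The `R`-linear map out of `A = R·1 ⊕ R·X` sending `1 ↦ p` and `X ↦ q`. -/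
def lmap {P : Type*} [AddCommGroup P] [Module R P] (p q : P) : A →ₗ[R] P :=
  (LinearMap.toSpanSingleton R P p).coprod (LinearMap.toSpanSingleton R P q)

/-- The basis element `1` of `A`. -/
def one' : A := (1, 0)

/-- The basis element `X` of `A`. -/
def Xa : A := (0, 1)

/-- Multiplication `m : A ⊗ A → A`, with `1·1 = 1`, `1·X = X·1 = X`, `X² = 0`. -/
def mul : A ⊗[R] A →ₗ[R] A :=
  TensorProduct.lift (lmap LinearMap.id (lmap Xa 0))

/-- Comultiplication `Δ(1) = 1⊗X + X⊗1 + c X⊗X`, `Δ(X) = X⊗X`. -/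
def Δ : A →ₗ[R] A ⊗[R] A :=
  lmap (one' ⊗ₜ[R] Xa + Xa ⊗ₜ[R] one' + (Polynomial.X : R) • (Xa ⊗ₜ[R] Xa)) (Xa ⊗ₜ[R] Xa)

/-- Counit `ε(1) = -c`, `ε(X) = 1`. -/
def ε : A →ₗ[R] R := lmap (-Polynomial.X) 1

/-- `ι₁ : A → A⊗A`, `t ↦ 1⊗t`. -/
def ι₁ : A →ₗ[R] A ⊗[R] A := TensorProduct.mk R A A one'

/-- `ε₁ = (ε ⊗ Id) : A⊗A → A`. -/
def ε₁ : A ⊗[R] A →ₗ[R] A :=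
  (TensorProduct.lid R A).toLinearMap ∘ₗ TensorProduct.map ε LinearMap.id

/-- `℘ = m₁ − m₁∘Δ₁∘ε₁`. -/
def wp : A ⊗[R] A →ₗ[R] A := mul - mul ∘ₗ Δ ∘ₗ ε₁

/-- `ℵ = ι₁ − c·(ι₁∘m₁∘Δ₁)`. -/
def aleph : A →ₗ[R] A ⊗[R] A := ι₁ - (Polynomial.X : R) • (ι₁ ∘ₗ mul ∘ₗ Δ)

lemma Aext {P : Type*} [AddCommGroup P] [Module R P] {f g : A →ₗ[R] P}
    (h1 : f one' = g one') (h2 : f Xa = g Xa) : f = g := by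
  ext
  · simpa [one'] using h1
  · simpa [Xa] using h2

/-- `℘∘Δ₁ = 0` and `℘∘ℵ = Id`. -/
theorem stmt8 : wp ∘ₗ Δ = 0 ∧ wp ∘ₗ aleph = LinearMap.id := by
  constructor
  · apply Aext <;>
      simp [wp, mul, Δ, ε₁, ε, lmap, one', Xa, TensorProduct.smul_tmul', TensorProduct.tmul_smul,
        TensorProduct.tmul_add, TensorProduct.add_tmul, Prod.ext_iff]
  · apply Aext <;>
      simp [wp, aleph, ι₁, mul, Δ, ε₁, ε, lmap, one', Xa, TensorProduct.smul_tmul',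
        TensorProduct.tmul_smul, TensorProduct.tmul_add, TensorProduct.add_tmul, Prod.ext_iff] <;>
      ring_nf
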